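/- Let G be a finite additive abelian group and let Σ=(Γ=(V,E),σ) be a signed graph with an orientation ω compatible with σ. Then the number q_Σ(G) of nowhere-zero G-flows of Σ is given by q_Σ(G) = (−1)^{|E|−|V|+k(Γ)} · T_Σ(0, 1−|G|, 1−|G|/|2G|), where k(Γ) is the number of connected components of Γ. -/

import Mathlib

attribute [local instance] Classical.propDecidable

noncomputable section SignedGraphs

/-- A signed graph: a multigraph with ordered pairs of endpoints (the order is
an artefact of the encoding) together with a sign `±1` on each edge. -/
structure SGraph (V : Type*) (E : Type*) where
  ends : E → V × V
  sign : E → ℤˣ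

namespace SGraph

variable {V E : Type*}

/-- Endpoint of `e` on side `b`; a loop has both endpoints equal, but its two
half-edges are distinguished by the side `b`. -/
def endpt (Γ : SGraph V E) (e : E) (b : Bool) : V :=
  cond b (Γ.ends e).1 (Γ.ends e).2

/-- `e` is a loop of the underlying graph. -/
def IsLoop (Γ : SGraph V E) (e : E) : Prop := (Γ.ends e).1 = (Γ.ends e).2

/-- Walks in a signed multigraph: a step traverses an edge `e` in direction `d`
(from the side-`d` endpoint to the other endpoint). -/
inductive Walk (Γ : SGraph V E) : V → V → Type _
  | nil (v : V) : Walk Γ v v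
  | cons (e : E) (d : Bool) {w : V} (p : Walk Γ (Γ.endpt e (!d)) w) : Walk Γ (Γ.endpt e d) w

namespace Walk

variable {Γ : SGraph V E}

/-- The list of vertices visited by a walk (including the final one). -/
def verts : ∀ {u v : V}, Γ.Walk u v → List V
  | _, _, .nil x => [x]
  | _, _, .cons e d p => Γ.endpt e d :: p.verts

/-- The list of edges traversed by a walk. -/
def edges : ∀ {u v : V}, Γ.Walk u v → List E
  | _, _, .nil _ => []
  | _, _, .cons e _ p => e :: p.edges

/-- The list of (edge, direction) steps of a walk. -/
def steps : ∀ {u v : V}, Γ.Walk u v → List (E × Bool)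
  | _, _, .nil _ => []
  | _, _, .cons e d p => (e, d) :: p.steps

/-- The sources of the steps of a walk, i.e. all visited vertices except the last. -/
def srcs {u v : V} (W : Γ.Walk u v) : List V := W.verts.dropLast

/-- The sign of a walk: the product of the signs of its edges. -/
def sgn : ∀ {u v : V}, Γ.Walk u v → ℤˣ
  | _, _, .nil _ => 1
  | _, _, .cons e _ p => Γ.sign e * p.sgn

/-- Concatenation of walks. -/
def append : ∀ {u v w : V}, Γ.Walk u v → Γ.Walk v w → Γ.Walk u w
  | _, _, _, .nil _, q => q
  | _, _, _, .cons e d p, q => .cons e d (p.append q)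

/-- The sum `Σᵢ f(eᵢ)` of the values of `f` on the edges of the walk,
with multiplicity. -/
def edgeSum {G : Type*} [AddCommGroup G] (f : E → G) {u v : V} (W : Γ.Walk u v) : G :=
  (W.edges.map f).sum

/-- The sum `Σᵢ ω(vᵢ,eᵢ)·(Π_{j<i} σ(eⱼ))·f(eᵢ)` along a walk, where `ω(vᵢ,eᵢ)`
is the value of `ω` on the half-edge by which the walk leaves `vᵢ`. -/
def tensionSum {G : Type*} [AddCommGroup G] (ω : E → Bool → ℤˣ) (f : E → G) :
    ∀ {u v : V}, Γ.Walk u v → G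
  | _, _, .nil _ => 0
  | _, _, .cons e d p => ((ω e d : ℤ) • f e) + ((Γ.sign e : ℤ) • tensionSum ω f p)

/-- `Q` is the reverse of the walk `P`. -/
def IsReverseOf {u v : V} (Q : Γ.Walk v u) (P : Γ.Walk u v) : Prop :=
  Q.steps = P.steps.reverse.map fun s => (s.1, !s.2)

end Walk

/-- A closed walk is a cycle if it is nontrivial, visits no vertex twice and
uses no edge twice. -/
def IsCycle (Γ : SGraph V E) {v : V} (W : Γ.Walk v v) : Prop :=
  W.edges ≠ [] ∧ W.srcs.Nodup ∧ W.edges.Nodup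

/-- A balanced (positive) cycle. -/
def IsBalancedCycle (Γ : SGraph V E) {v : V} (W : Γ.Walk v v) : Prop :=
  Γ.IsCycle W ∧ W.sgn = 1

/-- An unbalanced (negative) cycle. -/
def IsUnbalancedCycle (Γ : SGraph V E) {v : V} (W : Γ.Walk v v) : Prop :=
  Γ.IsCycle W ∧ W.sgn = -1

/-- A nontrivial walk that is a simple path (all visited vertices distinct). -/
def IsPathWalk (Γ : SGraph V E) {u v : V} (P : Γ.Walk u v) : Prop :=
  P.edges ≠ [] ∧ P.verts.Nodup

/-- A tight handcuff at `v`: two edge-disjoint unbalanced cycles sharing exactly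
the vertex `v`. -/
def IsTightHandcuff (Γ : SGraph V E) {v : V} (C₁ C₂ : Γ.Walk v v) : Prop :=
  Γ.IsUnbalancedCycle C₁ ∧ Γ.IsUnbalancedCycle C₂ ∧
    (∀ x ∈ C₁.srcs, x ∈ C₂.srcs → x = v) ∧ ∀ e ∈ C₁.edges, e ∉ C₂.edges

/-- A loose handcuff: two vertex-disjoint unbalanced cycles `C₁` (at `u`) and
`C₂` (at `w`) joined by a simple path `P` from `u` to `w` meeting the cycles
exactly in its endpoints. -/
def IsLooseHandcuff (Γ : SGraph V E) {u w : V} (C₁ : Γ.Walk u u) (P : Γ.Walk u w)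
    (C₂ : Γ.Walk w w) : Prop :=
  Γ.IsUnbalancedCycle C₁ ∧ Γ.IsUnbalancedCycle C₂ ∧ Γ.IsPathWalk P ∧
    (∀ x ∈ C₁.srcs, x ∉ C₂.srcs) ∧
    (∀ x ∈ P.verts, x ∈ C₁.srcs → x = u) ∧
    (∀ x ∈ P.verts, x ∈ C₂.srcs → x = w) ∧
    ∀ e ∈ P.edges, e ∉ C₁.edges ∧ e ∉ C₂.edges

/-- The canonical closed walks traversing a circuit of the signed graph:
a balanced cycle, a tight handcuff `C₁ * C₂`, or a loose handcuff
`C₁ * P * C₂ * P⁻¹` (the circuit path edges being used twice). -/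
def IsBasicCircuitWalk (Γ : SGraph V E) {v : V} (W : Γ.Walk v v) : Prop :=
  Γ.IsBalancedCycle W ∨
    (∃ C₁ C₂ : Γ.Walk v v, Γ.IsTightHandcuff C₁ C₂ ∧ W = C₁.append C₂) ∨
    ∃ (w : V) (C₁ : Γ.Walk v v) (P : Γ.Walk v w) (C₂ : Γ.Walk w w) (Q : Γ.Walk w v),
      Γ.IsLooseHandcuff C₁ P C₂ ∧ Q.IsReverseOf P ∧
        W = C₁.append (P.append (C₂.append Q))

/-- A circuit walk: a rotation of a basic circuit walk. -/
def IsCircuitWalk (Γ : SGraph V E) {v : V} (W : Γ.Walk v v) : Prop :=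
  ∃ (u : V) (A : Γ.Walk u v) (B : Γ.Walk v u),
    W = B.append A ∧ Γ.IsBasicCircuitWalk (A.append B)

/-- `e` is a circuit path edge: it lies on the connecting path of an unbalanced
loose handcuff. -/
def IsCircuitPathEdge (Γ : SGraph V E) (e : E) : Prop :=
  ∃ (u w : V) (C₁ : Γ.Walk u u) (P : Γ.Walk u w) (C₂ : Γ.Walk w w),
    Γ.IsLooseHandcuff C₁ P C₂ ∧ e ∈ P.edges

/-- Adjacency via an edge. -/
def Adj (Γ : SGraph V E) (a b : V) : Prop := ∃ e, Γ.ends e = (a, b) ∨ Γ.ends e = (b, a)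

/-- The set of connected components. -/
def Components (Γ : SGraph V E) : Type _ := Quot Γ.Adj

/-- The connected component of a vertex. -/
def comp (Γ : SGraph V E) (v : V) : Γ.Components := Quot.mk _ v

/-- The number `k(Γ)` of connected components. -/
def kAll (Γ : SGraph V E) : ℕ := Nat.card Γ.Components

/-- A connected component is balanced if every cycle it contains is balanced. -/
def IsBalancedComponent (Γ : SGraph V E) (c : Γ.Components) : Prop :=
  ∀ v : V, Γ.comp v = c → ∀ W : Γ.Walk v v, Γ.IsCycle W → W.sgn = 1

/-- The number `k_b(Σ)` of balanced connected components. -/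
def kb (Γ : SGraph V E) : ℕ := Nat.card {c : Γ.Components // Γ.IsBalancedComponent c}

/-- The number `k_u(Σ)` of unbalanced connected components. -/
def ku (Γ : SGraph V E) : ℕ := Nat.card {c : Γ.Components // ¬ Γ.IsBalancedComponent c}

/-- A signed graph is balanced if all its cycles are balanced. -/
def Balanced (Γ : SGraph V E) : Prop :=
  ∀ (v : V) (W : Γ.Walk v v), Γ.IsCycle W → W.sgn = 1

/-- A signed graph is connected if it has exactly one connected component. -/
def Connected (Γ : SGraph V E) : Prop := Γ.kAll = 1

/-- The spanning subgraph `Σ \ Aᶜ` with edge set `A`. -/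
def restrict (Γ : SGraph V E) (A : Set E) : SGraph V A :=
  { ends := fun e => Γ.ends e, sign := fun e => Γ.sign e }

/-- The signed Tutte polynomial (as a function of `x`, `y`, `z`):
`T_Σ(X,Y,Z) = Σ_{A⊆E} (X−1)^{k(Σ\Aᶜ)−k(Σ)} (Y−1)^{|A|−|V|+k_b(Σ\Aᶜ)} (Z−1)^{k_u(Σ\Aᶜ)}`. -/
def signedTutte {K : Type*} [CommRing K] (Γ : SGraph V E) (x y z : K) : K :=
  ∑ᶠ A : Finset E,
    (x - 1) ^ ((Γ.restrict (A : Set E)).kAll - Γ.kAll) *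
      (y - 1) ^ ((A.card + (Γ.restrict (A : Set E)).kb) - Nat.card V) *
        (z - 1) ^ (Γ.restrict (A : Set E)).ku

/-- Deletion of an edge. -/
def deleteEdge (Γ : SGraph V E) (e : E) : SGraph V {e' : E // e' ≠ e} :=
  { ends := fun e' => Γ.ends e'.1, sign := fun e' => Γ.sign e'.1 }

/-- The relation identifying the two endpoints of `e`. -/
def contractRel (Γ : SGraph V E) (e : E) (a b : V) : Prop := (a, b) = Γ.ends e

/-- Contraction of an edge: the two endpoints are identified and the edge is
deleted.  (For a loop this is just deletion, as the identification is trivial.) -/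
def contract (Γ : SGraph V E) (e : E) : SGraph (Quot (Γ.contractRel e)) {e' : E // e' ≠ e} :=
  { ends := fun e' => (Quot.mk _ (Γ.ends e'.1).1, Quot.mk _ (Γ.ends e'.1).2),
    sign := fun e' => Γ.sign e'.1 }

/-- `e` is a bridge: its deletion increases the number of connected components. -/
def IsBridge (Γ : SGraph V E) (e : E) : Prop := Γ.kAll < (Γ.deleteEdge e).kAll

/-- An orientation of the half-edges, compatible with the signature. -/
def IsCompatible (Γ : SGraph V E) (ω : E → Bool → ℤˣ) : Prop :=
  ∀ e, Γ.sign e = -(ω e true * ω e false)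

/-- A `G`-flow: Kirchhoff's law holds at every vertex. -/
def IsFlow (Γ : SGraph V E) (ω : E → Bool → ℤˣ) {G : Type*} [AddCommGroup G]
    (f : E → G) : Prop :=
  ∀ v : V,
    (∑ᶠ e : E, ((if Γ.endpt e true = v then (ω e true : ℤ) • f e else 0) +
      (if Γ.endpt e false = v then (ω e false : ℤ) • f e else 0))) = 0

/-- A `G`-tension: the alternating sum along every circuit walk vanishes. -/
def IsTension (Γ : SGraph V E) (ω : E → Bool → ℤˣ) {G : Type*} [AddCommGroup G]
    (f : E → G) : Prop :=
  ∀ (v : V) (W : Γ.Walk v v), Γ.IsCircuitWalk W → W.tensionSum ω f = 0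

end SGraph

/-- The doubling homomorphism `x ↦ x + x = 2x` of an abelian group. -/
def doubleHom (G : Type*) [AddCommGroup G] : G →+ G :=
  AddMonoidHom.mk' (fun x => x + x) (fun a b => add_add_add_comm a b a b)

/-- The subgroup `2G = {2x : x ∈ G}`. -/
def twoG (G : Type*) [AddCommGroup G] : AddSubgroup G := (doubleHom G).range

/-- The `2`-torsion subgroup `G₂ = {x ∈ G : 2x = 0}`. -/
def torsion2 (G : Type*) [AddCommGroup G] : AddSubgroup G := (doubleHom G).ker

namespace SGraph

variable {V E : Type*}

/-- A `G`-potential difference: a `G`-tension whose sum around every unbalanced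
cycle lies in `2G`. -/
def IsPotentialDifference (Γ : SGraph V E) (ω : E → Bool → ℤˣ) {G : Type*} [AddCommGroup G]
    (f : E → G) : Prop :=
  Γ.IsTension ω f ∧
    ∀ (v : V) (W : Γ.Walk v v), Γ.IsUnbalancedCycle W → W.edgeSum f ∈ twoG G

end SGraph

namespace SGraph

variable {V E : Type*}

/-- Proper coloring by elements of a set `X` with involution `ι`: adjacent
endpoints of a positive edge get different colors, and for a negative edge the
`ι`-image of one endpoint's color differs from the other endpoint's color. -/
def IsProperInvColoring (Γ : SGraph V E) {X : Type*} (ι : X → X) (f : V → X) : Prop :=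
  ∀ e : E, (Γ.sign e = 1 → f ((Γ.ends e).1) ≠ f ((Γ.ends e).2)) ∧
    (Γ.sign e = -1 → ι (f ((Γ.ends e).1)) ≠ f ((Γ.ends e).2))

/-- A proper `G`-coloring: for every edge `e = uv`, `f(u) ≠ f(v)` if `e` is
positive and `-f(u) ≠ f(v)` if `e` is negative, i.e. `σ(e)•f(u) ≠ f(v)`. -/
def IsProperColoring (Γ : SGraph V E) {G : Type*} [AddCommGroup G] (f : V → G) : Prop :=
  ∀ e : E, ((Γ.sign e : ℤ) • f ((Γ.ends e).1)) ≠ f ((Γ.ends e).2)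

/-- Zaslavsky's proper `n`-coloring: colors in `{0, ±1, …, ±n}` with
`f(u) ≠ σ(e)·f(v)` for every edge `e = uv`. -/
def IsProperNColoring (Γ : SGraph V E) (n : ℕ) (f : V → ℤ) : Prop :=
  (∀ v, |f v| ≤ (n : ℤ)) ∧
    ∀ e : E, f ((Γ.ends e).1) ≠ (Γ.sign e : ℤ) * f ((Γ.ends e).2)

/-- `T ⊆ E` is a spanning tree: the spanning subgraph `(V,T)` is connected and
contains no cycle. -/
def IsSpanningTree (Γ : SGraph V E) (T : Set E) : Prop :=
  (Γ.restrict T).Connected ∧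
    ∀ (v : V) (W : (Γ.restrict T).Walk v v), ¬ (Γ.restrict T).IsCycle W

/-- A connected basis of a connected signed graph: a spanning tree if `Σ` is
balanced; otherwise a spanning tree plus one extra edge closing an unbalanced
cycle. -/
def IsConnectedBasis (Γ : SGraph V E) (B : Set E) : Prop :=
  (Γ.Balanced ∧ Γ.IsSpanningTree B) ∨
    (¬ Γ.Balanced ∧ ∃ (T : Set E) (e : E), Γ.IsSpanningTree T ∧ e ∉ T ∧ B = insert e T ∧
      ∀ (v : V) (W : (Γ.restrict B).Walk v v), (Γ.restrict B).IsCycle W → W.sgn = -1)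

/-- Switching at a vertex `v`: the sign of every non-loop edge incident with `v`
is negated; loops keep their sign. -/
def switchAt (Γ : SGraph V E) (v : V) : SGraph V E :=
  { ends := Γ.ends,
    sign := fun e => if ((Γ.ends e).1 = v ↔ (Γ.ends e).2 = v) then Γ.sign e else -Γ.sign e }

/-- Switching at a set `S` of vertices (the composite of the switchings at the
vertices of `S`): the sign of an edge is negated iff exactly one of its
endpoints lies in `S`. -/
def switchSet (Γ : SGraph V E) (S : Set V) : SGraph V E :=
  { ends := Γ.ends,
    sign := fun e => if ((Γ.ends e).1 ∈ S ↔ (Γ.ends e).2 ∈ S) then Γ.sign e else -Γ.sign e }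

/-- Isomorphism of signed graphs (as undirected signed multigraphs). -/
def Iso {V₁ E₁ V₂ E₂ : Type*} (Γ₁ : SGraph V₁ E₁) (Γ₂ : SGraph V₂ E₂) : Prop :=
  ∃ (φ : V₁ ≃ V₂) (ψ : E₁ ≃ E₂), ∀ e : E₁,
    (Γ₂.ends (ψ e) = (φ (Γ₁.ends e).1, φ (Γ₁.ends e).2) ∨
      Γ₂.ends (ψ e) = (φ (Γ₁.ends e).2, φ (Γ₁.ends e).1)) ∧
    Γ₂.sign (ψ e) = Γ₁.sign e

/-- Switching equivalence: isomorphism after switching at a set of vertices. -/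
def SwitchEquiv {V₁ E₁ V₂ E₂ : Type*} (Γ₁ : SGraph V₁ E₁) (Γ₂ : SGraph V₂ E₂) : Prop :=
  ∃ S : Set V₁, Iso (Γ₁.switchSet S) Γ₂

/-- Disjoint union of signed graphs. -/
def disjUnion {V₁ E₁ V₂ E₂ : Type*} (Γ₁ : SGraph V₁ E₁) (Γ₂ : SGraph V₂ E₂) :
    SGraph (V₁ ⊕ V₂) (E₁ ⊕ E₂) where
  ends := fun e => match e with
    | .inl e => (Sum.inl (Γ₁.ends e).1, Sum.inl (Γ₁.ends e).2)
    | .inr e => (Sum.inr (Γ₂.ends e).1, Sum.inr (Γ₂.ends e).2)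
  sign := fun e => match e with
    | .inl e => Γ₁.sign e
    | .inr e => Γ₂.sign e

/-- The difference operator `δ : G^V → G^E`,
`(δg)(e) = ω(v,e)·g(v) + ω(u,e)·g(u)` for `e = uv`. -/
def deltaHom (Γ : SGraph V E) (ω : E → Bool → ℤˣ) (G : Type*) [AddCommGroup G] :
    (V → G) →+ (E → G) :=
  AddMonoidHom.mk'
    (fun g e => (ω e true : ℤ) • g ((Γ.ends e).1) + (ω e false : ℤ) • g ((Γ.ends e).2))
    (by
      intro a b
      funext e
      simp only [Pi.add_apply, smul_add]
      abel)

end SGraph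

end SignedGraphs

section WalkLemmas

namespace SGraph

variable {V E : Type*} {Γ : SGraph V E}

namespace Walk

lemma verts_ne_nil : ∀ {u v : V} (W : Γ.Walk u v), W.verts ≠ []
  | _, _, .nil _ => by simp [verts]
  | _, _, .cons e d p => by simp [verts]

@[simp] lemma verts_nil (x : V) : (Walk.nil (Γ := Γ) x).verts = [x] := rfl

@[simp] lemma verts_cons (e : E) (d : Bool) {w : V} (p : Γ.Walk (Γ.endpt e (!d)) w) :
    (Walk.cons e d p).verts = Γ.endpt e d :: p.verts := rfl

@[simp] lemma srcs_nil (x : V) : (Walk.nil (Γ := Γ) x).srcs = [] := rfl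

@[simp] lemma srcs_cons (e : E) (d : Bool) {w : V} (p : Γ.Walk (Γ.endpt e (!d)) w) :
    (Walk.cons e d p).srcs = Γ.endpt e d :: p.srcs := by
  unfold Walk.srcs
  rw [verts_cons, List.dropLast_cons_of_ne_nil (verts_ne_nil p)]

@[simp] lemma edges_nil (x : V) : (Walk.nil (Γ := Γ) x).edges = [] := rfl

@[simp] lemma edges_cons (e : E) (d : Bool) {w : V} (p : Γ.Walk (Γ.endpt e (!d)) w) :
    (Walk.cons e d p).edges = e :: p.edges := rfl

@[simp] lemma sgn_nil (x : V) : (Walk.nil (Γ := Γ) x).sgn = 1 := rfl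

@[simp] lemma sgn_cons (e : E) (d : Bool) {w : V} (p : Γ.Walk (Γ.endpt e (!d)) w) :
    (Walk.cons e d p).sgn = Γ.sign e * p.sgn := rfl

@[simp] lemma nil_append {u v : V} (W : Γ.Walk u v) : (Walk.nil u).append W = W := rfl

@[simp] lemma cons_append (e : E) (d : Bool) {w x : V} (p : Γ.Walk (Γ.endpt e (!d)) w)
    (q : Γ.Walk w x) : (Walk.cons e d p).append q = Walk.cons e d (p.append q) := rfl

lemma verts_append : ∀ {u v w : V} (P : Γ.Walk u v) (Q : Γ.Walk v w),
    (P.append Q).verts = P.srcs ++ Q.verts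
  | _, _, _, .nil _, Q => by simp
  | _, _, _, .cons e d p, Q => by
      rw [cons_append, verts_cons, verts_append p Q, srcs_cons]; rfl

lemma srcs_append {u v w : V} (P : Γ.Walk u v) (Q : Γ.Walk v w) :
    (P.append Q).srcs = P.srcs ++ Q.srcs := by
  show (P.append Q).verts.dropLast = P.srcs ++ Q.verts.dropLast
  rw [verts_append P Q, List.dropLast_append_of_ne_nil (verts_ne_nil Q)]

lemma edges_append : ∀ {u v w : V} (P : Γ.Walk u v) (Q : Γ.Walk v w),
    (P.append Q).edges = P.edges ++ Q.edges
  | _, _, _, .nil _, Q => by simp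
  | _, _, _, .cons e d p, Q => by
      rw [cons_append, edges_cons, edges_append p Q]; rfl

lemma sgn_append : ∀ {u v w : V} (P : Γ.Walk u v) (Q : Γ.Walk v w),
    (P.append Q).sgn = P.sgn * Q.sgn
  | _, _, _, .nil _, Q => by simp
  | _, _, _, .cons e d p, Q => by
      rw [cons_append, sgn_cons, sgn_cons, sgn_append p Q, mul_assoc]

lemma sgn_eq_one_of_edges_eq_nil : ∀ {u v : V} (W : Γ.Walk u v), W.edges = [] → W.sgn = 1
  | _, _, .nil _, _ => rfl
  | _, _, .cons e d p, h => by simp at h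

/-- The one-step walk along an edge. -/
def step1 (e : E) (d : Bool) : Γ.Walk (Γ.endpt e d) (Γ.endpt e (!d)) := .cons e d (.nil _)

/-- The one-step walk along an edge, reversed indexing. -/
def step1' (e : E) : (d : Bool) → Γ.Walk (Γ.endpt e (!d)) (Γ.endpt e d)
  | true => step1 e false
  | false => step1 e true

@[simp] lemma sgn_step1 (e : E) (d : Bool) : (step1 (Γ := Γ) e d).sgn = Γ.sign e := by
  simp [step1]

@[simp] lemma sgn_step1' (e : E) (d : Bool) : (step1' (Γ := Γ) e d).sgn = Γ.sign e := by
  cases d <;> simp [step1']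

/-- Reversal of a walk. -/
def reverse : ∀ {u v : V}, Γ.Walk u v → Γ.Walk v u
  | _, _, .nil x => .nil x
  | _, _, .cons e d p => p.reverse.append (step1' e d)

@[simp] lemma sgn_reverse : ∀ {u v : V} (W : Γ.Walk u v), W.reverse.sgn = W.sgn
  | _, _, .nil _ => rfl
  | _, _, .cons e d p => by
      rw [reverse, sgn_append, sgn_reverse p, sgn_step1', sgn_cons, mul_comm]

end Walk

open Walk

lemma comp_endpt_not (e : E) (d : Bool) :
    Γ.comp (Γ.endpt e d) = Γ.comp (Γ.endpt e (!d)) := by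
  cases d
  · exact Quot.sound ⟨e, Or.inr (Prod.mk.eta).symm⟩
  · exact Quot.sound ⟨e, Or.inl (Prod.mk.eta).symm⟩

lemma comp_eq_of_walk : ∀ {u v : V}, Γ.Walk u v → Γ.comp u = Γ.comp v
  | _, _, .nil _ => rfl
  | _, _, .cons e d p => (comp_endpt_not e d).trans (comp_eq_of_walk p)

lemma comp_eq_of_mem_verts : ∀ {u v : V} (W : Γ.Walk u v) {x : V},
    x ∈ W.verts → Γ.comp x = Γ.comp u
  | _, _, .nil _, x, hx => by
      simp only [verts_nil, List.mem_singleton] at hx; rw [hx]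
  | _, _, .cons e d p, x, hx => by
      rw [verts_cons, List.mem_cons] at hx
      rcases hx with h | h
      · rw [h]
      · rw [comp_eq_of_mem_verts p h, ← comp_endpt_not e d]

lemma srcs_subset_verts {u v : V} (W : Γ.Walk u v) : W.srcs ⊆ W.verts :=
  (List.dropLast_sublist W.verts).subset

lemma comp_eq_of_mem_srcs {u v : V} (W : Γ.Walk u v) {x : V} (hx : x ∈ W.srcs) :
    Γ.comp x = Γ.comp u :=
  comp_eq_of_mem_verts W (srcs_subset_verts W hx)

lemma nonempty_walk_of_adj {a b : V} (h : Γ.Adj a b) : Nonempty (Γ.Walk a b) := by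
  obtain ⟨e, h | h⟩ := h
  · have w := step1 (Γ := Γ) e true
    have h1 : Γ.endpt e true = a := by show (Γ.ends e).1 = a; rw [h]
    have h2 : Γ.endpt e (!true) = b := by show (Γ.ends e).2 = b; rw [h]
    rw [h1, h2] at w
    exact ⟨w⟩
  · have w := step1 (Γ := Γ) e false
    have h1 : Γ.endpt e false = a := by show (Γ.ends e).2 = a; rw [h]
    have h2 : Γ.endpt e (!false) = b := by show (Γ.ends e).1 = b; rw [h]
    rw [h1, h2] at w
    exact ⟨w⟩

lemma nonempty_walk_of_comp_eq {u v : V} (h : Γ.comp u = Γ.comp v) :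
    Nonempty (Γ.Walk u v) := by
  have h' := Quot.eqvGen_exact h
  clear h
  induction h' with
  | rel a b hab => exact nonempty_walk_of_adj hab
  | refl a => exact ⟨.nil a⟩
  | symm a b hab ih => exact ⟨ih.some.reverse⟩
  | trans a b c hab hbc ih1 ih2 => exact ⟨ih1.some.append ih2.some⟩

end SGraph

end WalkLemmas

section Splitting

namespace SGraph

open Walk

variable {V E : Type*} {Γ : SGraph V E}

lemma mem_srcs_head : ∀ {u v : V} (W : Γ.Walk u v), W.edges ≠ [] → u ∈ W.srcs
  | _, _, .nil _, h => absurd rfl h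
  | _, _, .cons e d p, _ => by rw [srcs_cons]; exact List.mem_cons_self

lemma mem_srcs_head' {u v : V} (W : Γ.Walk u v) (h : W.edges ≠ []) {x : V}
    (hx : x = u) : x ∈ W.srcs := by
  subst hx; exact mem_srcs_head W h

lemma splitV : ∀ {u v : V} (W : Γ.Walk u v) (x : V), x ∈ W.srcs →
    ∃ (P : Γ.Walk u x) (R : Γ.Walk x v), W = P.append R ∧ R.edges ≠ []
  | _, _, .nil _, x, hx => by simp at hx
  | _, _, .cons e d p, x, hx => by
      by_cases h : x = Γ.endpt e d
      · subst h
        exact ⟨.nil _, .cons e d p, rfl, by simp⟩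
      · rw [srcs_cons, List.mem_cons] at hx
        obtain ⟨P, R, hPR, hR⟩ := splitV p x (hx.resolve_left h)
        exact ⟨.cons e d P, R, by rw [hPR, cons_append], hR⟩

lemma splitE : ∀ {u v : V} (W : Γ.Walk u v) (e : E), e ∈ W.edges →
    ∃ (d : Bool) (P : Γ.Walk u (Γ.endpt e d)) (R : Γ.Walk (Γ.endpt e (!d)) v),
      W = P.append (.cons e d R) ∧ e ∉ P.edges
  | _, _, .nil _, e, he => by simp at he
  | _, _, .cons e' d' p, e, he => by
      by_cases h : e' = e
      · subst h
        exact ⟨d', .nil _, p, rfl, by simp⟩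
      · rw [edges_cons, List.mem_cons] at he
        obtain ⟨d, P, R, hPR, hP⟩ := splitE p e (he.resolve_left (fun hh => h hh.symm))
        refine ⟨d, .cons e' d' P, R, by rw [hPR, cons_append], ?_⟩
        rw [edges_cons, List.mem_cons]
        rintro (hh | hh)
        · exact h hh.symm
        · exact hP hh

lemma splitInner : ∀ {u v : V} (W : Γ.Walk u v), ¬ W.srcs.Nodup →
    ∃ (x : V) (P : Γ.Walk u x) (Q : Γ.Walk x x) (R : Γ.Walk x v),
      W = P.append (Q.append R) ∧ Q.edges ≠ [] ∧ Q.srcs.Nodup ∧ R.edges ≠ []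
  | _, _, .nil _, h => by simp at h
  | _, _, .cons e d p, h => by
      by_cases hp : p.srcs.Nodup
      · have hu : Γ.endpt e d ∈ p.srcs := by
          by_contra hnotin
          exact h (by rw [srcs_cons]; exact List.nodup_cons.mpr ⟨hnotin, hp⟩)
        obtain ⟨P₁, R₁, hsplit, hR₁⟩ := splitV p _ hu
        have hhead : Γ.endpt e d ∈ R₁.srcs := mem_srcs_head R₁ hR₁
        have hsrcs : (P₁.srcs ++ R₁.srcs).Nodup := by
          rw [← srcs_append, ← hsplit]; exact hp
        rw [List.nodup_append] at hsrcs
        refine ⟨Γ.endpt e d, .nil _, .cons e d P₁, R₁, ?_, by simp, ?_, hR₁⟩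
        · rw [nil_append, cons_append, ← hsplit]
        · rw [srcs_cons]
          exact List.nodup_cons.mpr ⟨fun hmem => hsrcs.2.2 _ hmem _ hhead rfl, hsrcs.1⟩
      · obtain ⟨x, P, Q, R, h1, h2, h3, h4⟩ := splitInner p hp
        exact ⟨x, .cons e d P, Q, R, by rw [h1, cons_append], h2, h3, h4⟩

lemma exists_neg_cycle_aux : ∀ (n : ℕ) {u : V} (W : Γ.Walk u u), W.edges.length ≤ n →
    W.sgn = -1 →
    ∃ (x : V) (C : Γ.Walk x x), Γ.IsCycle C ∧ C.sgn = -1 ∧ Γ.comp x = Γ.comp u := by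
  intro n
  induction n with
  | zero =>
    intro u W hlen hsgn
    have h0 : W.edges = [] := List.eq_nil_of_length_eq_zero (Nat.le_zero.mp hlen)
    rw [sgn_eq_one_of_edges_eq_nil W h0] at hsgn
    exact absurd hsgn (by decide)
  | succ n ih =>
    intro u W hlen hsgn
    have hne : W.edges ≠ [] := fun hnil => by
      rw [sgn_eq_one_of_edges_eq_nil W hnil] at hsgn; exact absurd hsgn (by decide)
    by_cases h1 : W.srcs.Nodup
    · by_cases h2 : W.edges.Nodup
      · exact ⟨u, W, ⟨hne, h1, h2⟩, hsgn, rfl⟩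
      · -- there is a repeated edge
        obtain ⟨e, he2⟩ : ∃ e, 2 ≤ W.edges.count e := by
          by_contra hc
          push_neg at hc
          exact h2 (List.nodup_iff_count_le_one.mpr fun a => by
            have := hc a; omega)
        have heW : e ∈ W.edges := by
          have : 0 < W.edges.count e := by omega
          exact List.count_pos_iff.mp this
        obtain ⟨d, P, M₀, hW, heP⟩ := splitE W e heW
        have heM₀ : e ∈ M₀.edges := by
          have hcnt : W.edges.count e = P.edges.count e + (1 + M₀.edges.count e) := by
            rw [hW, edges_append, edges_cons, List.count_append, List.count_cons_self]
            omega
          rw [List.count_eq_zero_of_not_mem heP] at hcnt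
          have : 0 < M₀.edges.count e := by omega
          exact List.count_pos_iff.mp this
        have hsgnW' : (Walk.cons e d (M₀.append P)).sgn = -1 := by
          rw [← hsgn, hW, sgn_cons, sgn_append, sgn_append, sgn_cons]
          simp [mul_comm, mul_assoc, mul_left_comm]
        have hnodW' : (Walk.cons e d (M₀.append P)).srcs.Nodup := by
          rw [srcs_cons, srcs_append, ← List.cons_append, List.nodup_append_comm]
          rw [hW, srcs_append, srcs_cons] at h1
          exact h1
        have heM : e ∈ (M₀.append P).edges := by
          rw [edges_append, List.mem_append]; exact Or.inl heM₀
        obtain ⟨d₂, P₁, Q₁, hM2, -⟩ := splitE (M₀.append P) e heM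
        rw [hM2] at hsgnW' hnodW'
        rw [srcs_cons, srcs_append, srcs_cons] at hnodW'
        have hd₂ : d₂ = !d := by
          by_contra hdne
          have hd : d₂ = d := by revert hdne; cases d <;> cases d₂ <;> simp
          have heq : Γ.endpt e d₂ = Γ.endpt e d := by rw [hd]
          exact (List.nodup_cons.mp hnodW').1
            (by rw [List.mem_append]; exact Or.inr (List.mem_cons.mpr (Or.inl heq.symm)))
        subst hd₂
        have hQ₁nil : Q₁.edges = [] := by
          by_contra hne2
          have heq : Γ.endpt e d = Γ.endpt e (!(!d)) := by rw [Bool.not_not]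
          have hmem' : Γ.endpt e d ∈ Q₁.srcs := mem_srcs_head' Q₁ hne2 heq
          exact (List.nodup_cons.mp hnodW').1
            (by rw [List.mem_append]; exact Or.inr (List.mem_cons.mpr (Or.inr hmem')))
        rw [sgn_cons, sgn_append, sgn_cons, sgn_eq_one_of_edges_eq_nil Q₁ hQ₁nil,
          mul_one] at hsgnW'
        have hP₁sgn : P₁.sgn = -1 := by
          rw [← hsgnW']
          have h5 : Γ.sign e * Γ.sign e = 1 := Int.units_mul_self _
          calc P₁.sgn = P₁.sgn * (Γ.sign e * Γ.sign e) := by rw [h5, mul_one]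
          _ = Γ.sign e * (P₁.sgn * Γ.sign e) := by
              simp [mul_comm, mul_assoc, mul_left_comm]
        have hlenP₁ : P₁.edges.length ≤ n := by
          have h3 : W.edges.length = P.edges.length + (1 + M₀.edges.length) := by
            rw [hW, edges_append, edges_cons, List.length_append, List.length_cons]
            omega
          have h4 := congrArg
            (fun (w : Γ.Walk (Γ.endpt e (!d)) (Γ.endpt e d)) => w.edges.length) hM2
          simp only [edges_append, edges_cons, List.length_append, List.length_cons,
            hQ₁nil, List.length_nil] at h4
          omega
        obtain ⟨x, C, hC, hCsgn, hcomp⟩ := ih P₁ hlenP₁ hP₁sgn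
        refine ⟨x, C, hC, hCsgn, ?_⟩
        rw [hcomp, ← comp_endpt_not e d]
        exact (comp_eq_of_walk P).symm
    · obtain ⟨x, P, Q, R, hW, hQne, hQnodup, hRne⟩ := splitInner W h1
      have hsgns : P.sgn * (Q.sgn * R.sgn) = -1 := by
        rw [← sgn_append, ← sgn_append, ← hW]; exact hsgn
      have hlens : P.edges.length + (Q.edges.length + R.edges.length) ≤ n + 1 := by
        rw [hW, edges_append, edges_append] at hlen
        simpa using hlen
      have hQpos : 0 < Q.edges.length := List.length_pos_iff.mpr hQne
      have hRpos : 0 < R.edges.length := List.length_pos_iff.mpr hRne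
      rcases Int.units_eq_one_or Q.sgn with hQ | hQ
      · have hsgnPR : (P.append R).sgn = -1 := by
          rw [sgn_append]
          rw [hQ, one_mul] at hsgns
          exact hsgns
        have hlenPR : (P.append R).edges.length ≤ n := by
          rw [edges_append, List.length_append]; omega
        exact ih (P.append R) hlenPR hsgnPR
      · have hlenQ : Q.edges.length ≤ n := by omega
        obtain ⟨x', C, hC, hCsgn, hcomp⟩ := ih Q hlenQ hQ
        exact ⟨x', C, hC, hCsgn, hcomp.trans (comp_eq_of_walk P).symm⟩

end SGraph

end Splitting

section Potentials

namespace SGraph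

open Walk

variable {V E : Type*} {Γ : SGraph V E}

lemma sgn_eq_one_of_balanced {c : Γ.Components} (hc : Γ.IsBalancedComponent c)
    {v : V} (hv : Γ.comp v = c) (W : Γ.Walk v v) : W.sgn = 1 := by
  rcases Int.units_eq_one_or W.sgn with h | h
  · exact h
  · obtain ⟨x, C, hC, hCsgn, hcomp⟩ := exists_neg_cycle_aux W.edges.length W le_rfl h
    have hx := hc x (by rw [hcomp, hv]) C hC
    rw [hx] at hCsgn
    exact absurd hCsgn (by decide)

lemma sgn_eq_sgn_of_balanced {a b v : V} (hab : a = b)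
    (hbal : Γ.IsBalancedComponent (Γ.comp v))
    (W₁ : Γ.Walk a v) (W₂ : Γ.Walk b v) : W₁.sgn = W₂.sgn := by
  subst hab
  have h := sgn_eq_one_of_balanced hbal rfl (W₁.reverse.append W₂)
  rw [sgn_append, sgn_reverse] at h
  calc W₁.sgn = W₁.sgn * (W₁.sgn * W₂.sgn) := by rw [h, mul_one]
  _ = (W₁.sgn * W₁.sgn) * W₂.sgn := by rw [mul_assoc]
  _ = W₂.sgn := by rw [Int.units_mul_self, one_mul]

lemma sgn_closed_eq_one {a b : V} (hab : a = b) (W : Γ.Walk a b)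
    (hbal : Γ.IsBalancedComponent (Γ.comp b)) : W.sgn = 1 := by
  subst hab
  exact sgn_eq_one_of_balanced hbal rfl W

lemma zsmul_unit_of_two_torsion {H : Type*} [AddCommGroup H] {x : H} (hx : x + x = 0)
    (s : ℤˣ) : (s : ℤ) • x = x := by
  rcases Int.units_eq_one_or s with h | h
  · rw [h]; simp
  · rw [h]
    simpa using neg_eq_of_add_eq_zero_left hx

lemma prop_along {H : Type*} [AddCommGroup H] {g : V → H}
    (hg : ∀ e : E, g ((Γ.ends e).2) = (Γ.sign e : ℤ) • g ((Γ.ends e).1)) :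
    ∀ {u v : V} (W : Γ.Walk u v), g v = (W.sgn : ℤ) • g u
  | _, _, .nil x => by
      show g x = ((1 : ℤˣ) : ℤ) • g x
      rw [Units.val_one, one_smul]
  | _, _, .cons e d p => by
      have hrec := prop_along hg p
      rw [sgn_cons]
      cases d
      · have h1 : g ((Γ.ends e).1) = (Γ.sign e : ℤ) • g ((Γ.ends e).2) := by
          rw [hg e, smul_smul, ← Units.val_mul, Int.units_mul_self, Units.val_one, one_smul]
        exact calc g _ = (p.sgn : ℤ) • g ((Γ.ends e).1) := hrec
        _ = (p.sgn : ℤ) • ((Γ.sign e : ℤ) • g ((Γ.ends e).2)) := by rw [h1]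
        _ = ((Γ.sign e * p.sgn : ℤˣ) : ℤ) • g ((Γ.ends e).2) := by
            rw [smul_smul, Units.val_mul, mul_comm]
      · exact calc g _ = (p.sgn : ℤ) • g ((Γ.ends e).2) := hrec
        _ = (p.sgn : ℤ) • ((Γ.sign e : ℤ) • g ((Γ.ends e).1)) := by rw [hg e]
        _ = ((Γ.sign e * p.sgn : ℤˣ) : ℤ) • g ((Γ.ends e).1) := by
            rw [smul_smul, Units.val_mul, mul_comm]

variable (Γ) in
/-- The chosen walk from the chosen basepoint of the component of `v` to `v`. -/
noncomputable def wv (v : V) : Γ.Walk (Γ.comp v).out v :=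
  (nonempty_walk_of_comp_eq (by exact Quot.out_eq _)).some

lemma two_torsion_of_unbal {H : Type*} [AddCommGroup H] {g : V → H}
    (hg : ∀ e : E, g ((Γ.ends e).2) = (Γ.sign e : ℤ) • g ((Γ.ends e).1))
    {v : V} (hv : ¬ Γ.IsBalancedComponent (Γ.comp v)) : g v + g v = 0 := by
  rw [SGraph.IsBalancedComponent] at hv
  push_neg at hv
  obtain ⟨x, hx, W, hW, hsgn⟩ := hv
  have hsgn' : W.sgn = -1 := (Int.units_eq_one_or W.sgn).resolve_left hsgn
  have h2 : g x + g x = 0 := by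
    have := prop_along hg W
    rw [hsgn'] at this
    have h4 : g x = -g x := by simpa using this
    exact eq_neg_iff_add_eq_zero.mp h4
  have hwalk : Nonempty (Γ.Walk x v) := nonempty_walk_of_comp_eq hx
  have h3 := prop_along hg hwalk.some
  rw [h3, ← smul_add, h2, smul_zero]

variable (Γ) in
noncomputable def kerDeltaEquiv (H : Type*) [AddCommGroup H] :
    {g : V → H // ∀ e : E, g ((Γ.ends e).2) = (Γ.sign e : ℤ) • g ((Γ.ends e).1)} ≃
      ((c : Γ.Components) → {x : H // ¬ Γ.IsBalancedComponent c → x + x = 0}) where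
  toFun g := fun c => ⟨g.1 c.out, fun hc =>
    two_torsion_of_unbal g.2 (by
      have hc2 : Γ.comp (Quot.out c) = c := Quot.out_eq c
      rw [hc2]; exact hc)⟩
  invFun φ := ⟨fun v => ((wv Γ v).sgn : ℤ) • (φ (Γ.comp v)).1, by
    intro e
    dsimp only
    have hcc : Γ.comp ((Γ.ends e).1) = Γ.comp ((Γ.ends e).2) := comp_endpt_not e true
    have hφ : (φ (Γ.comp ((Γ.ends e).2))).1 = (φ (Γ.comp ((Γ.ends e).1))).1 := by rw [hcc]
    rw [hφ]
    by_cases hbal : Γ.IsBalancedComponent (Γ.comp ((Γ.ends e).2))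
    · have hout : (Γ.comp ((Γ.ends e).2)).out = (Γ.comp ((Γ.ends e).1)).out := by rw [hcc]
      have hsgn : (wv Γ ((Γ.ends e).2)).sgn = ((wv Γ ((Γ.ends e).1)).append (step1 e true)).sgn :=
        sgn_eq_sgn_of_balanced hout hbal _ _
      have hsgn2 := (sgn_append (wv Γ ((Γ.ends e).1)) (step1 (Γ := Γ) e true)).trans
        (congrArg (fun s => (wv Γ ((Γ.ends e).1)).sgn * s) (sgn_step1 e true))
      have hsgn3 := hsgn.trans hsgn2
      rw [hsgn3, Units.val_mul, mul_comm, ← smul_smul]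
    · have hx : (φ (Γ.comp ((Γ.ends e).1))).1 + (φ (Γ.comp ((Γ.ends e).1))).1 = 0 :=
        (φ (Γ.comp ((Γ.ends e).1))).2 (by rw [hcc]; exact hbal)
      rw [zsmul_unit_of_two_torsion hx, zsmul_unit_of_two_torsion hx,
        zsmul_unit_of_two_torsion hx]⟩
  left_inv g := by
    apply Subtype.ext
    funext v
    exact (prop_along g.2 (wv Γ v)).symm
  right_inv φ := by
    funext c
    apply Subtype.ext
    have hc : Γ.comp c.out = c := Quot.out_eq c
    show ((wv Γ c.out).sgn : ℤ) • (φ (Γ.comp c.out)).1 = (φ c).1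
    have hφ : (φ (Γ.comp c.out)).1 = (φ c).1 := by rw [hc]
    rw [hφ]
    by_cases hbal : Γ.IsBalancedComponent c
    · have h1 : (wv Γ c.out).sgn = 1 :=
        sgn_closed_eq_one (congrArg Quot.out hc) _ (by rw [hc]; exact hbal)
      rw [h1]; simp
    · exact zsmul_unit_of_two_torsion ((φ c).2 hbal) _

lemma card_kerDelta [Finite V] (H : Type*) [AddCommGroup H] [Finite H] :
    Nat.card {g : V → H // ∀ e : E, g ((Γ.ends e).2) = (Γ.sign e : ℤ) • g ((Γ.ends e).1)} =
      Nat.card H ^ Γ.kb * (Nat.card {x : H // x + x = 0}) ^ Γ.ku := by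
  have hfin : Finite Γ.Components := Finite.of_surjective _ (Quot.mk_surjective (r := Γ.Adj))
  have hft : Fintype Γ.Components := Fintype.ofFinite _
  rw [Nat.card_congr (kerDeltaEquiv Γ H), Nat.card_pi]
  rw [← Finset.prod_filter_mul_prod_filter_not Finset.univ Γ.IsBalancedComponent]
  have h1 : ∀ c ∈ Finset.univ.filter Γ.IsBalancedComponent,
      Nat.card {x : H // ¬ Γ.IsBalancedComponent c → x + x = 0} = Nat.card H := by
    intro c hc
    rw [Finset.mem_filter] at hc
    exact Nat.card_congr (Equiv.subtypeUnivEquiv (fun x h => absurd hc.2 h))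
  have h2 : ∀ c ∈ Finset.univ.filter (fun c => ¬ Γ.IsBalancedComponent c),
      Nat.card {x : H // ¬ Γ.IsBalancedComponent c → x + x = 0} =
        Nat.card {x : H // x + x = 0} := by
    intro c hc
    rw [Finset.mem_filter] at hc
    exact Nat.card_congr (Equiv.subtypeEquivRight (fun x => ⟨fun h => h hc.2, fun h _ => h⟩))
  rw [Finset.prod_congr rfl h1, Finset.prod_congr rfl h2, Finset.prod_const, Finset.prod_const]
  congr 1
  · congr 1
    rw [SGraph.kb, Nat.card_eq_fintype_card, Fintype.card_subtype]
  · congr 1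
    rw [SGraph.ku, Nat.card_eq_fintype_card, Fintype.card_subtype]

end SGraph

end Potentials

section HomCount

namespace SFT

noncomputable section

/-- The circle group `ℚ/ℤ` used as dualising target. -/
abbrev CC := AddCircle (1 : ℚ)

def Qmk : ℚ →+ CC := QuotientAddGroup.mk' (AddSubgroup.zmultiples (1 : ℚ))

lemma Qmk_eq_zero_iff (x : ℚ) : Qmk x = 0 ↔ ∃ m : ℤ, (m : ℚ) = x := by
  rw [Qmk, QuotientAddGroup.mk'_apply, QuotientAddGroup.eq_zero_iff,
    AddSubgroup.mem_zmultiples_iff]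
  constructor
  · rintro ⟨k, hk⟩; exact ⟨k, by simpa using hk⟩
  · rintro ⟨m, hm⟩; exact ⟨m, by simpa using hm⟩

def zmodTorsionHom (n : ℕ) : ZMod n →+ CC :=
  ZMod.lift n ⟨(zmultiplesHom CC) (Qmk ((n : ℚ)⁻¹)), by
    rw [zmultiplesHom_apply, ← map_zsmul, Qmk_eq_zero_iff]
    rcases Nat.eq_zero_or_pos n with h | h
    · exact ⟨0, by simp [h]⟩
    · refine ⟨1, ?_⟩
      have hn : (n : ℚ) ≠ 0 := Nat.cast_ne_zero.mpr h.ne'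
      rw [zsmul_eq_mul]
      push_cast
      field_simp⟩

lemma zmod_equiv_torsion (n : ℕ) (hn : 0 < n) :
    Nonempty (ZMod n ≃ {y : CC // (n : ℤ) • y = 0}) := by
  haveI : NeZero n := ⟨hn.ne'⟩
  have hnQ : (n : ℚ) ≠ 0 := Nat.cast_ne_zero.mpr hn.ne'
  have tor : ∀ x : ZMod n, (n : ℤ) • zmodTorsionHom n x = 0 := by
    intro x
    rw [← map_zsmul]
    have : (n : ℤ) • x = 0 := by
      rw [zsmul_eq_mul]
      simp [ZMod.natCast_self]
    rw [this, map_zero]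
  refine ⟨Equiv.ofBijective (fun x => ⟨zmodTorsionHom n x, tor x⟩) ⟨?_, ?_⟩⟩
  · intro x y hxy
    have hxy' := congrArg Subtype.val hxy
    dsimp only at hxy'
    have key : ∀ z : ZMod n, zmodTorsionHom n z = 0 → z = 0 := by
      intro z hz
      have hz' : z = ((z.val : ℤ) : ZMod n) := by
        rw [Int.cast_natCast, ZMod.natCast_rightInverse z]
      have hz2 : zmodTorsionHom n ((z.val : ℤ) : ZMod n) = 0 := by rw [← hz']; exact hz
      rw [zmodTorsionHom, ZMod.lift_coe, zmultiplesHom_apply, ← map_zsmul,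
        Qmk_eq_zero_iff] at hz2
      obtain ⟨m, hm⟩ := hz2
      rw [zsmul_eq_mul] at hm
      have h1 : ((z.val : ℤ) : ℚ) = (m : ℚ) * (n : ℚ) := by
        rw [hm]
        field_simp
      have h2 : (z.val : ℤ) = m * n := by exact_mod_cast h1
      have hdvd : (n : ℤ) ∣ (z.val : ℤ) := ⟨m, by linarith⟩
      have hdvd' : n ∣ z.val := Int.natCast_dvd_natCast.mp hdvd
      have hv0 : z.val = 0 := Nat.eq_zero_of_dvd_of_lt hdvd' (ZMod.val_lt z)
      rw [hz', hv0]
      simp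
    have := key (x - y) (by rw [map_sub, hxy', sub_self])
    exact sub_eq_zero.mp this
  · rintro ⟨y, hy⟩
    obtain ⟨q, hq⟩ := QuotientAddGroup.mk'_surjective (AddSubgroup.zmultiples (1 : ℚ)) y
    have hq' : Qmk q = y := hq
    have h0 : Qmk ((n : ℤ) • q) = 0 := by
      rw [map_zsmul, hq', hy]
    rw [Qmk_eq_zero_iff] at h0
    obtain ⟨m, hm⟩ := h0
    rw [zsmul_eq_mul] at hm
    push_cast at hm
    refine ⟨((m : ℤ) : ZMod n), ?_⟩
    apply Subtype.ext
    show zmodTorsionHom n ((m : ℤ) : ZMod n) = y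
    rw [zmodTorsionHom, ZMod.lift_coe, zmultiplesHom_apply, ← map_zsmul, ← hq']
    congr 1
    rw [zsmul_eq_mul]
    field_simp
    linarith

lemma zmodHom_equiv (n : ℕ) (hn : 0 < n) : Nonempty ((ZMod n →+ CC) ≃ ZMod n) := by
  have e1 : (ZMod n →+ CC) ≃ {f : ℤ →+ CC // f ↑n = 0} := (ZMod.lift n).symm
  have e2 : {f : ℤ →+ CC // f ↑n = 0} ≃ {y : CC // (n : ℤ) • y = 0} := by
    refine Equiv.subtypeEquiv (zmultiplesHom CC).symm (fun f => ?_)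
    conv_lhs => rw [← (zmultiplesHom CC).apply_symm_apply f]
    rw [zmultiplesHom_apply]
  exact ⟨e1.trans (e2.trans (zmod_equiv_torsion n hn).some.symm)⟩

lemma addMonoidHom_equiv_self (A : Type*) [AddCommGroup A] [Finite A] :
    Nonempty ((A →+ CC) ≃ A) := by
  classical
  obtain ⟨ι, hι, n, hn, ⟨eA⟩⟩ := AddCommGroup.equiv_directSum_zmod_of_finite' A
  haveI := hι
  let ePi : (DirectSum ι (fun i => ZMod (n i))) ≃+ ((i : ι) → ZMod (n i)) :=
    AddEquiv.mk' DFinsupp.equivFunOnFintype (fun a b => rfl)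
  let e1 : (A →+ CC) ≃+ ((DirectSum ι (fun i => ZMod (n i))) →+ CC) :=
    AddEquiv.addMonoidHomCongrLeft eA
  let e2 : ((DirectSum ι (fun i => ZMod (n i))) →+ CC) ≃+ (((i : ι) → ZMod (n i)) →+ CC) :=
    AddEquiv.addMonoidHomCongrLeft ePi
  let e3 := Pi.addMonoidHomAddEquiv (fun i => ZMod (n i)) CC
  let e4 : ((i : ι) → (ZMod (n i) →+ CC)) ≃ ((i : ι) → ZMod (n i)) :=
    Equiv.piCongrRight (fun i => (zmodHom_equiv (n i) (Nat.lt_of_lt_of_le Nat.zero_lt_one (hn i).le)).some)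
  exact ⟨e1.toEquiv.trans (e2.toEquiv.trans (e3.toEquiv.trans
    (e4.trans (ePi.toEquiv.symm.trans eA.symm.toEquiv))))⟩

lemma card_addMonoidHom (A : Type*) [AddCommGroup A] [Finite A] :
    Nat.card (A →+ CC) = Nat.card A :=
  Nat.card_congr (addMonoidHom_equiv_self A).some

lemma finite_addMonoidHom (A : Type*) [AddCommGroup A] [Finite A] : Finite (A →+ CC) :=
  Finite.of_equiv _ (addMonoidHom_equiv_self A).some.symm

def vanishEquiv {B : Type*} [AddCommGroup B] (K : AddSubgroup B) :
    {φ : B →+ CC // ∀ x ∈ K, φ x = 0} ≃ ((B ⧸ K) →+ CC) where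
  toFun ψ := QuotientAddGroup.lift K ψ.1 (fun x hx => ψ.2 x hx)
  invFun χ := ⟨χ.comp (QuotientAddGroup.mk' K), fun x hx => by
    simp only [AddMonoidHom.coe_comp, Function.comp_apply, QuotientAddGroup.mk'_apply]
    rw [(QuotientAddGroup.eq_zero_iff x).mpr hx, map_zero]⟩
  left_inv ψ := by
    apply Subtype.ext
    ext x
    rfl
  right_inv χ := by
    ext q
    rfl

lemma card_vanishing {B : Type*} [AddCommGroup B] [Finite B] (K : AddSubgroup B) :
    Nat.card {φ : B →+ CC // ∀ x ∈ K, φ x = 0} = Nat.card (B ⧸ K) := by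
  haveI : Finite (B ⧸ K) := Quotient.finite _
  rw [Nat.card_congr (vanishEquiv K), card_addMonoidHom]

end

end SFT

end HomCount

section MainCount

namespace SFT

open SGraph

set_option linter.unusedSectionVars false

variable {V E : Type*} [Fintype V] [Fintype E] (Γ : SGraph V E)
  (ω : E → Bool → ℤˣ) (G : Type*) [AddCommGroup G]

noncomputable def bdry : (E → G) →+ (V → G) :=
  AddMonoidHom.mk' (fun f v => ∑ e : E,
    ((if Γ.endpt e true = v then (ω e true : ℤ) • f e else 0) +
      (if Γ.endpt e false = v then (ω e false : ℤ) • f e else 0)))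
    (by
      intro f g
      funext v
      show _ = (∑ e : E, (_ : G)) + (∑ e : E, (_ : G))
      rw [← Finset.sum_add_distrib]
      apply Finset.sum_congr rfl
      intro e _
      simp only [Pi.add_apply, smul_add]
      split_ifs <;> abel)

lemma isFlow_iff_bdry (f : E → G) : Γ.IsFlow ω f ↔ bdry Γ ω G f = 0 := by
  constructor
  · intro h
    funext v
    have hv := h v
    rw [finsum_eq_sum_of_fintype] at hv
    exact hv
  · intro h v
    rw [finsum_eq_sum_of_fintype]
    exact congrFun h v

lemma bdry_single (e : E) (x : G) :
    bdry Γ ω G (Pi.single e x) =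
      Pi.single (Γ.endpt e true) ((ω e true : ℤ) • x) +
        Pi.single (Γ.endpt e false) ((ω e false : ℤ) • x) := by
  funext v
  show (∑ e' : E, _) = _
  have h1 : ∀ t : Bool,
      (∑ e' : E, if Γ.endpt e' t = v then (ω e' t : ℤ) • (Pi.single e x : E → G) e' else 0) =
        (if Γ.endpt e t = v then (ω e t : ℤ) • x else 0) := by
    intro t
    rw [Finset.sum_eq_single e]
    · rw [Pi.single_eq_same]
    · intro e' _ hne
      rw [Pi.single_eq_of_ne hne, smul_zero, ite_self]
    · intro h; exact absurd (Finset.mem_univ e) h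
  rw [Finset.sum_add_distrib, h1 true, h1 false, Pi.add_apply, Pi.single_apply,
    Pi.single_apply]
  congr 1 <;> exact if_congr eq_comm rfl rfl

lemma unit_smul_inv {M : Type*} [AddCommGroup M] (s : ℤˣ) (m : M) :
    (s : ℤ) • (s : ℤ) • m = m := by
  rw [smul_smul, ← Units.val_mul, Int.units_mul_self, Units.val_one, one_smul]

lemma sign_solve {M : Type*} [AddCommGroup M] (ωt ωf : ℤˣ) (X : Type*) (A B : X → M) :
    (∀ x, (ωt : ℤ) • A x + (ωf : ℤ) • B x = 0) ↔
      (∀ x, B x = ((-(ωt * ωf) : ℤˣ) : ℤ) • A x) := by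
  have hc : ∀ x : X, ((-(ωt * ωf) : ℤˣ) : ℤ) • A x = -((ωf : ℤ) • (ωt : ℤ) • A x) := by
    intro x
    rw [smul_smul]
    simp only [Units.val_neg, Units.val_mul, neg_smul]
    rw [mul_comm]
  constructor
  · intro h x
    have h2 : (ωf : ℤ) • (ωt : ℤ) • A x + B x = 0 := by
      have h3 := congrArg (fun z => (ωf : ℤ) • z) (h x)
      simpa [smul_add, unit_smul_inv] using h3
    rw [hc]
    exact eq_neg_of_add_eq_zero_right h2
  · intro h x
    rw [h x, hc, smul_neg, unit_smul_inv, add_neg_cancel]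

variable [Finite G]

lemma card_flows_mul :
    Nat.card {f : E → G // Γ.IsFlow ω f} * Nat.card (bdry Γ ω G).range =
      Nat.card G ^ Nat.card E := by
  have h1 : Nat.card (E → G) = Nat.card ((E → G) ⧸ (bdry Γ ω G).ker) *
      Nat.card (bdry Γ ω G).ker :=
    AddSubgroup.card_eq_card_quotient_mul_card_addSubgroup _
  rw [Nat.card_congr (QuotientAddGroup.quotientKerEquivRange (bdry Γ ω G)).toEquiv] at h1
  have h2 : Nat.card {f : E → G // Γ.IsFlow ω f} = Nat.card (bdry Γ ω G).ker := by
    apply Nat.card_congr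
    exact Equiv.subtypeEquivRight (fun f => by
      rw [isFlow_iff_bdry]; exact AddMonoidHom.mem_ker.symm)
  rw [h2, Nat.card_fun] at *
  rw [mul_comm] at h1
  exact h1.symm

lemma card_range_mul :
    Nat.card (bdry Γ ω G).range * Nat.card ((V → G) ⧸ (bdry Γ ω G).range) =
      Nat.card G ^ Nat.card V := by
  have h1 : Nat.card (V → G) = Nat.card ((V → G) ⧸ (bdry Γ ω G).range) *
      Nat.card (bdry Γ ω G).range :=
    AddSubgroup.card_eq_card_quotient_mul_card_addSubgroup _
  rw [Nat.card_fun] at h1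
  rw [mul_comm]
  exact h1.symm

lemma card_quot_range (hω : Γ.IsCompatible ω) :
    Nat.card ((V → G) ⧸ (bdry Γ ω G).range) =
      Nat.card (G →+ CC) ^ Γ.kb * (Nat.card {x : G →+ CC // x + x = 0}) ^ Γ.ku := by
  classical
  haveI : Finite (G →+ CC) := finite_addMonoidHom G
  rw [← card_vanishing ((bdry Γ ω G).range), ← card_kerDelta (Γ := Γ) (G →+ CC)]
  apply Nat.card_congr
  let Ξ := Pi.addMonoidHomAddEquiv (fun _ : V => G) CC
  have hXi : ∀ (φ : (V → G) →+ CC) (v : V) (x : G), Ξ φ v x = φ (Pi.single v x) := by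
    intro φ v x
    rfl
  refine Equiv.trans (Equiv.subtypeEquivRight
      (q := fun φ : (V → G) →+ CC => φ.comp (bdry Γ ω G) = 0) (fun φ => ?_))
    (Equiv.subtypeEquiv Ξ.toEquiv (fun φ => ?_))
  · constructor
    · intro h
      apply AddMonoidHom.ext
      intro f
      simpa using h _ ⟨f, rfl⟩
    · rintro h x ⟨f, rfl⟩
      simpa using DFunLike.congr_fun h f
  · constructor
    · intro h e
      have hs := (sign_solve (ω e true) (ω e false) G
          (fun x => Ξ φ ((Γ.ends e).1) x) (fun x => Ξ φ ((Γ.ends e).2) x)).mp ?_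
      · rw [hω e]
        ext x
        rw [AddMonoidHom.smul_apply]
        exact hs x
      · intro x
        have h0 : φ (bdry Γ ω G (Pi.single e x)) = 0 := by
          simpa using DFunLike.congr_fun h (Pi.single e x)
        rw [bdry_single, map_add, ← hXi, ← hXi, map_zsmul, map_zsmul] at h0
        exact h0
    · intro h
      apply AddMonoidHom.ext
      intro f
      show φ (bdry Γ ω G f) = 0
      have hf : (∑ e : E, φ (bdry Γ ω G (Pi.single e (f e)))) = φ (bdry Γ ω G f) := by
        rw [← map_sum, ← map_sum, Finset.univ_sum_single]
      rw [← hf]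
      apply Finset.sum_eq_zero
      intro e _
      have hs := (sign_solve (ω e true) (ω e false) G
          (fun x => Ξ φ ((Γ.ends e).1) x) (fun x => Ξ φ ((Γ.ends e).2) x)).mpr ?_
      · rw [bdry_single, map_add, ← hXi, ← hXi, map_zsmul, map_zsmul]
        exact hs (f e)
      · intro x
        have h1 := DFunLike.congr_fun (h e) x
        rw [AddMonoidHom.smul_apply, hω e] at h1
        exact h1

lemma card_two_torsion_dual :
    Nat.card {x : G →+ CC // x + x = 0} = Nat.card (G ⧸ twoG G) := by
  rw [← card_vanishing (twoG G)]
  apply Nat.card_congr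
  apply Equiv.subtypeEquivRight
  intro ψ
  constructor
  · rintro h x ⟨y, rfl⟩
    show ψ (y + y) = 0
    rw [map_add, ← AddMonoidHom.add_apply, h, AddMonoidHom.zero_apply]
  · intro h
    ext y
    rw [AddMonoidHom.add_apply, AddMonoidHom.zero_apply, ← map_add]
    exact h _ ⟨y, rfl⟩

lemma mainCount (hω : Γ.IsCompatible ω) :
    Nat.card {f : E → G // Γ.IsFlow ω f} * Nat.card G ^ Nat.card V =
      Nat.card G ^ (Nat.card E + Γ.kb) * Nat.card (G ⧸ twoG G) ^ Γ.ku := by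
  have h1 := card_flows_mul Γ ω G
  have h2 := card_range_mul Γ ω G
  have h3 := card_quot_range Γ ω G hω
  rw [card_two_torsion_dual, card_addMonoidHom] at h3
  calc Nat.card {f : E → G // Γ.IsFlow ω f} * Nat.card G ^ Nat.card V
      = Nat.card {f : E → G // Γ.IsFlow ω f} *
        (Nat.card (bdry Γ ω G).range * Nat.card ((V → G) ⧸ (bdry Γ ω G).range)) := by
        rw [h2]
    _ = (Nat.card {f : E → G // Γ.IsFlow ω f} * Nat.card (bdry Γ ω G).range) *
        Nat.card ((V → G) ⧸ (bdry Γ ω G).range) := by ring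
    _ = Nat.card G ^ Nat.card E *
        (Nat.card G ^ Γ.kb * Nat.card (G ⧸ twoG G) ^ Γ.ku) := by rw [h1, h3]
    _ = Nat.card G ^ (Nat.card E + Γ.kb) * Nat.card (G ⧸ twoG G) ^ Γ.ku := by
        rw [pow_add]; ring

end SFT

end MainCount

section Bounds

namespace SFT

open SGraph

variable {V E : Type*}

lemma exists_compatible (Γ : SGraph V E) : ∃ ω, Γ.IsCompatible ω :=
  ⟨fun e b => if b then 1 else -(Γ.sign e), fun e => by simp⟩

lemma isFlow_zero (Γ : SGraph V E) (ω : E → Bool → ℤˣ) (G : Type*) [AddCommGroup G] :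
    Γ.IsFlow ω (0 : E → G) := by
  intro v
  simp

lemma twoG_zmod3_top : twoG (ZMod 3) = ⊤ := by
  rw [AddSubgroup.eq_top_iff']
  intro x
  show x ∈ (doubleHom (ZMod 3)).range
  rw [AddMonoidHom.mem_range]
  refine ⟨2 * x, ?_⟩
  show 2 * x + 2 * x = x
  have h4 : (4 : ZMod 3) = 1 := by decide
  calc 2 * x + 2 * x = 4 * x := by ring
  _ = x := by rw [h4, one_mul]

lemma vertex_bound [Finite V] [Finite E] (Γ : SGraph V E) :
    Nat.card V ≤ Nat.card E + Γ.kb := by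
  haveI : Fintype V := Fintype.ofFinite V
  haveI : Fintype E := Fintype.ofFinite E
  obtain ⟨ω, hω⟩ := exists_compatible Γ
  have h := mainCount Γ ω (ZMod 3) hω
  have hq : Nat.card (ZMod 3 ⧸ twoG (ZMod 3)) = 1 := by
    rw [twoG_zmod3_top]
    haveI : Subsingleton (ZMod 3 ⧸ (⊤ : AddSubgroup (ZMod 3))) :=
      QuotientAddGroup.subsingleton_quotient_top
    exact Nat.card_of_subsingleton 0
  rw [hq, Nat.card_zmod] at h
  rw [one_pow] at h
  rw [mul_one] at h
  haveI : Nonempty {f : E → ZMod 3 // Γ.IsFlow ω f} := ⟨⟨0, isFlow_zero Γ ω _⟩⟩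
  have hpos : 0 < Nat.card {f : E → ZMod 3 // Γ.IsFlow ω f} := Nat.card_pos
  have hle : 3 ^ Nat.card V ≤ 3 ^ (Nat.card E + Γ.kb) := by
    calc 3 ^ Nat.card V ≤ Nat.card {f : E → ZMod 3 // Γ.IsFlow ω f} * 3 ^ Nat.card V :=
      Nat.le_mul_of_pos_left _ hpos
    _ = 3 ^ (Nat.card E + Γ.kb) := h
  exact (Nat.pow_le_pow_iff_right (by norm_num)).mp hle

lemma kb_le_kAll [Finite V] (Γ : SGraph V E) : Γ.kb ≤ Γ.kAll := by
  haveI : Finite Γ.Components := Finite.of_surjective _ (Quot.mk_surjective (r := Γ.Adj))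
  exact Finite.card_subtype_le _

lemma kb_add_ku [Finite V] (Γ : SGraph V E) : Γ.kb + Γ.ku = Γ.kAll := by
  haveI : Finite Γ.Components := Finite.of_surjective _ (Quot.mk_surjective (r := Γ.Adj))
  haveI : Fintype Γ.Components := Fintype.ofFinite _
  classical
  rw [SGraph.kb, SGraph.ku, SGraph.kAll, Nat.card_eq_fintype_card, Nat.card_eq_fintype_card,
    Nat.card_eq_fintype_card, Fintype.card_subtype, Fintype.card_subtype]
  exact Finset.card_filter_add_card_filter_not _

lemma kAll_le_restrict [Finite V] (Γ : SGraph V E) (A : Set E) :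
    Γ.kAll ≤ (Γ.restrict A).kAll := by
  haveI : Finite (Γ.restrict A).Components :=
    Finite.of_surjective _ (Quot.mk_surjective (r := (Γ.restrict A).Adj))
  have hlift : ∀ a b : V, (Γ.restrict A).Adj a b → Γ.comp a = Γ.comp b := by
    rintro a b ⟨e, h | h⟩
    · exact Quot.sound ⟨e.1, Or.inl h⟩
    · exact Quot.sound ⟨e.1, Or.inr h⟩
  refine Nat.card_le_card_of_surjective (Quot.lift Γ.comp hlift) ?_
  intro c
  obtain ⟨v, rfl⟩ := Quot.mk_surjective c
  exact ⟨Quot.mk _ v, rfl⟩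

end SFT

end Bounds

section Restriction

namespace SFT

open SGraph

set_option linter.unusedSectionVars false

variable {V E : Type*} [Finite V] [Finite E] (Γ : SGraph V E) (ω : E → Bool → ℤˣ)
  (G : Type*) [AddCommGroup G] [Finite G]

/-- The restriction of the orientation to a subset of the edges. -/
def ωres (A : Set E) : ↥A → Bool → ℤˣ := fun e b => ω e.1 b

lemma compat_res (hω : Γ.IsCompatible ω) (A : Set E) :
    (Γ.restrict A).IsCompatible (ωres ω A) := fun e => hω e.1

/-- Extension by zero. -/
noncomputable def extFun (A : Finset E) (f : ↥((A : Finset E) : Set E) → G) : E → G :=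
  fun e => if h : e ∈ (A : Set E) then f ⟨e, h⟩ else 0

lemma flow_ext_iff (A : Finset E) (g : E → G) (hg : ∀ e ∉ A, g e = 0) :
    Γ.IsFlow ω g ↔ (Γ.restrict (A : Set E)).IsFlow (ωres ω (A : Set E)) (fun e => g e.1) := by
  classical
  haveI : Fintype E := Fintype.ofFinite E
  apply forall_congr'
  intro v
  rw [finsum_eq_sum_of_fintype, finsum_eq_sum_of_fintype]
  have hsum : (∑ e : E,
      ((if Γ.endpt e true = v then (ω e true : ℤ) • g e else 0) +
        (if Γ.endpt e false = v then (ω e false : ℤ) • g e else 0))) =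
      ∑ x : ↥((A : Finset E) : Set E),
      ((if Γ.endpt x.1 true = v then (ω x.1 true : ℤ) • g x.1 else 0) +
        (if Γ.endpt x.1 false = v then (ω x.1 false : ℤ) • g x.1 else 0)) := by
    rw [← Finset.sum_subset (Finset.subset_univ A)]
    · rw [← Finset.sum_coe_sort A
        (fun e => ((if Γ.endpt e true = v then (ω e true : ℤ) • g e else 0) +
          (if Γ.endpt e false = v then (ω e false : ℤ) • g e else 0)))]
      apply Finset.sum_congr rfl
      intro x _
      rfl
    · intro e _ he
      rw [hg e he]
      simp
  rw [hsum]
  rfl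

noncomputable def flowsResEquiv (hω : Γ.IsCompatible ω) (A : Finset E) :
    {f : ↥((A : Finset E) : Set E) → G //
        (Γ.restrict (A : Set E)).IsFlow (ωres ω (A : Set E)) f} ≃
      {g : E → G // Γ.IsFlow ω g ∧ ∀ e ∉ A, g e = 0} where
  toFun f := ⟨extFun G A f.1, by
    refine ⟨?_, fun e he => dif_neg (by simpa using he)⟩
    have hres : (fun e : ↥((A : Finset E) : Set E) => extFun G A f.1 e.1) = f.1 := by
      funext x
      show dite _ _ _ = _
      rw [dif_pos x.2]
    rw [flow_ext_iff Γ ω G A (extFun G A f.1) (fun e he => dif_neg (by simpa using he)), hres]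
    exact f.2⟩
  invFun g := ⟨fun x => g.1 x.1, (flow_ext_iff Γ ω G A g.1 g.2.2).mp g.2.1⟩
  left_inv f := by
    apply Subtype.ext
    funext x
    show dite _ _ _ = _
    rw [dif_pos x.2]
  right_inv g := by
    apply Subtype.ext
    funext e
    show dite _ _ _ = _
    by_cases h : e ∈ (A : Set E)
    · rw [dif_pos h]
    · rw [dif_neg h]
      exact (g.2.2 e (by simpa using h)).symm

lemma card_flows_restrict (hω : Γ.IsCompatible ω) (A : Finset E) :
    Nat.card {g : E → G // Γ.IsFlow ω g ∧ ∀ e ∉ A, g e = 0} *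
        Nat.card G ^ Nat.card V =
      Nat.card G ^ (A.card + (Γ.restrict (A : Set E)).kb) *
        Nat.card (G ⧸ twoG G) ^ (Γ.restrict (A : Set E)).ku := by
  classical
  haveI : Fintype V := Fintype.ofFinite V
  haveI : Fintype E := Fintype.ofFinite E
  haveI : Fintype ↥((A : Finset E) : Set E) := Fintype.ofFinite _
  rw [← Nat.card_congr (flowsResEquiv Γ ω G hω A)]
  have h := mainCount (Γ.restrict (A : Set E)) (ωres ω (A : Set E)) G (compat_res Γ ω hω A)
  have hcard : Nat.card ↥((A : Finset E) : Set E) = A.card := by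
    rw [Nat.card_coe_set_eq, Set.ncard_coe_finset]
  rw [hcard] at h
  exact h

lemma bound_restrict (A : Finset E) :
    Nat.card V ≤ A.card + (Γ.restrict (A : Set E)).kb := by
  have h := vertex_bound (Γ.restrict (A : Set E))
  have hcard : Nat.card ↥((A : Finset E) : Set E) = A.card := by
    rw [Nat.card_coe_set_eq, Set.ncard_coe_finset]
  rwa [hcard] at h

end SFT

end Restriction

section Moebius

namespace SFT

open SGraph

set_option linter.unusedSectionVars false

lemma neg_one_pow_sub {b a : ℕ} (h : b ≤ a) :
    ((-1 : ℚ)) ^ (a - b) = (-1) ^ a * (-1) ^ b := by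
  rw [pow_sub₀ (-1 : ℚ) (by norm_num) h, ← inv_pow, inv_neg, inv_one]

variable {V E : Type*} [Finite V] [Finite E] (Γ : SGraph V E) (ω : E → Bool → ℤˣ)
  (G : Type*) [AddCommGroup G] [Finite G]

lemma key_sum [Fintype E] (B : Finset E) :
    (∑ A : Finset E, if B ⊆ A then ((-1 : ℚ)) ^ (Nat.card E - A.card) else 0) =
      if B = Finset.univ then 1 else 0 := by
  classical
  rw [← Finset.sum_filter]
  rw [Finset.sum_nbij' (i := fun A => A \ B) (j := fun C => B ∪ C)
    (t := Bᶜ.powerset) (g := fun C => ((-1 : ℚ)) ^ (Bᶜ.card - C.card))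
    (fun A hA => by
      rw [Finset.mem_powerset]
      intro x hx
      rw [Finset.mem_compl]
      exact (Finset.mem_sdiff.mp hx).2)
    (fun C hC => Finset.mem_filter.mpr ⟨Finset.mem_univ _, Finset.subset_union_left⟩)
    (fun A hA => Finset.union_sdiff_of_subset (Finset.mem_filter.mp hA).2)
    (fun C hC => Finset.union_sdiff_cancel_left (by
      rw [Finset.disjoint_left]
      intro x hxB hxC
      exact Finset.mem_compl.mp (Finset.mem_powerset.mp hC hxC) hxB))
    (fun A hA => by
      show ((-1 : ℚ)) ^ (Nat.card E - A.card) = ((-1 : ℚ)) ^ (Bᶜ.card - (A \ B).card)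
      congr 1
      have h1 : B ⊆ A := (Finset.mem_filter.mp hA).2
      have h2 : (A \ B).card = A.card - B.card := Finset.card_sdiff_of_subset h1
      have h3 : Bᶜ.card = Fintype.card E - B.card := Finset.card_compl B
      have h4 : A.card ≤ Fintype.card E := by
        rw [← Finset.card_univ]; exact Finset.card_le_card (Finset.subset_univ A)
      have h5 : B.card ≤ A.card := Finset.card_le_card h1
      have h6 : Nat.card E = Fintype.card E := Nat.card_eq_fintype_card
      omega)]
  have hterm : ∀ C ∈ Bᶜ.powerset, ((-1 : ℚ)) ^ (Bᶜ.card - C.card) =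
      ((-1 : ℚ)) ^ Bᶜ.card * (-1) ^ C.card :=
    fun C hC => neg_one_pow_sub (Finset.card_le_card (Finset.mem_powerset.mp hC))
  rw [Finset.sum_congr rfl hterm, ← Finset.mul_sum]
  have hz : (∑ m ∈ Bᶜ.powerset, (-1 : ℚ) ^ m.card) =
      (((∑ m ∈ Bᶜ.powerset, (-1 : ℤ) ^ m.card : ℤ)) : ℚ) := by push_cast; rfl
  rw [hz, Finset.sum_powerset_neg_one_pow_card]
  by_cases hB : B = Finset.univ
  · rw [if_pos (show Bᶜ = ∅ by rw [hB, Finset.compl_univ]), if_pos hB, hB, Finset.compl_univ]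
    simp
  · rw [if_neg (fun h : Bᶜ = ∅ => hB ((Finset.compl_eq_empty_iff _).mp h)), if_neg hB]
    simp

lemma moebius [Fintype E] [Fintype G] :
    (Nat.card {f : E → G // Γ.IsFlow ω f ∧ ∀ e : E, f e ≠ 0} : ℚ) =
      ∑ A : Finset E, (-1 : ℚ) ^ (Nat.card E - A.card) *
        (Nat.card {g : E → G // Γ.IsFlow ω g ∧ ∀ e ∉ A, g e = 0} : ℚ) := by
  classical
  have hsub : ∀ (P : (E → G) → Prop), Nat.card {g : E → G // P g} =
      (Finset.univ.filter P).card := by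
    intro P
    rw [Nat.card_eq_fintype_card, Fintype.card_subtype]
  set S : Finset (E → G) := Finset.univ.filter (fun g => Γ.IsFlow ω g) with hS
  set supp : (E → G) → Finset E := fun g => Finset.univ.filter (fun e => g e ≠ 0) with hsupp
  have hM : ∀ A : Finset E, Nat.card {g : E → G // Γ.IsFlow ω g ∧ ∀ e ∉ A, g e = 0} =
      (S.filter (fun g => supp g ⊆ A)).card := by
    intro A
    rw [hsub, hS, Finset.filter_filter]
    congr 1
    ext g
    simp only [Finset.mem_filter, Finset.mem_univ, true_and]
    apply and_congr_right
    intro _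
    constructor
    · intro h e he
      by_contra heA
      exact (Finset.mem_filter.mp he).2 (h e heA)
    · intro h e heA
      by_contra hge
      exact heA (h (Finset.mem_filter.mpr ⟨Finset.mem_univ e, hge⟩))
  have hfib : ∀ A : Finset E, (S.filter (fun g => supp g ⊆ A)).card =
      ∑ B ∈ A.powerset, (S.filter (fun g => supp g = B)).card := by
    intro A
    rw [Finset.card_eq_sum_card_fiberwise (f := supp) (t := A.powerset)
      (fun g hg => Finset.mem_powerset.mpr (Finset.mem_filter.mp hg).2)]
    apply Finset.sum_congr rfl
    intro B hB
    congr 1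
    ext g
    simp only [Finset.mem_filter]
    constructor
    · rintro ⟨⟨h1, _⟩, h3⟩
      exact ⟨h1, h3⟩
    · rintro ⟨h1, h3⟩
      exact ⟨⟨h1, by rw [h3]; exact Finset.mem_powerset.mp hB⟩, h3⟩
  have hnz : Nat.card {f : E → G // Γ.IsFlow ω f ∧ ∀ e : E, f e ≠ 0} =
      (S.filter (fun g => supp g = Finset.univ)).card := by
    rw [hsub, hS, Finset.filter_filter]
    congr 1
    ext g
    simp only [Finset.mem_filter, Finset.mem_univ, true_and]
    apply and_congr_right
    intro _
    rw [Finset.eq_univ_iff_forall]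
    constructor
    · intro h e
      exact Finset.mem_filter.mpr ⟨Finset.mem_univ e, h e⟩
    · intro h e
      exact (Finset.mem_filter.mp (h e)).2
  rw [hnz]
  calc ((S.filter (fun g => supp g = Finset.univ)).card : ℚ)
      = ∑ B : Finset E, (if B = Finset.univ then 1 else 0) *
          ((S.filter (fun g => supp g = B)).card : ℚ) := by
        rw [Finset.sum_eq_single Finset.univ
          (fun B _ hB => by rw [if_neg hB, zero_mul])
          (fun h => absurd (Finset.mem_univ _) h)]
        rw [if_pos rfl, one_mul]
    _ = ∑ B : Finset E, (∑ A : Finset E,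
          if B ⊆ A then ((-1 : ℚ)) ^ (Nat.card E - A.card) else 0) *
          ((S.filter (fun g => supp g = B)).card : ℚ) := by
        apply Finset.sum_congr rfl
        intro B _
        rw [key_sum]
    _ = ∑ B : Finset E, ∑ A : Finset E,
          (if B ⊆ A then ((-1 : ℚ)) ^ (Nat.card E - A.card) else 0) *
          ((S.filter (fun g => supp g = B)).card : ℚ) := by
        apply Finset.sum_congr rfl
        intro B _
        rw [Finset.sum_mul]
    _ = ∑ A : Finset E, ∑ B : Finset E,
          (if B ⊆ A then ((-1 : ℚ)) ^ (Nat.card E - A.card) else 0) *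
          ((S.filter (fun g => supp g = B)).card : ℚ) := Finset.sum_comm
    _ = ∑ A : Finset E, (-1 : ℚ) ^ (Nat.card E - A.card) *
          ∑ B ∈ A.powerset, ((S.filter (fun g => supp g = B)).card : ℚ) := by
        apply Finset.sum_congr rfl
        intro A _
        rw [Finset.mul_sum]
        simp only [ite_mul, zero_mul]
        rw [← Finset.sum_filter]
        have hps : Finset.univ.filter (fun B : Finset E => B ⊆ A) = A.powerset := by
          ext B
          simp [Finset.mem_powerset]
        rw [hps]
    _ = ∑ A : Finset E, (-1 : ℚ) ^ (Nat.card E - A.card) *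
          (Nat.card {g : E → G // Γ.IsFlow ω g ∧ ∀ e ∉ A, g e = 0} : ℚ) := by
        apply Finset.sum_congr rfl
        intro A _
        rw [hM, hfib]
        push_cast
        rfl

end SFT

end Moebius

section FinalAssembly

namespace SFT

lemma sign_arith (m a n k kA kbA kuA : ℕ) (q t : ℚ)
    (h1 : a ≤ m) (h2 : n ≤ a + kbA) (h3 : n ≤ m + k) (h4 : k ≤ kA)
    (h5 : kbA + kuA = kA) :
    (-1 : ℚ) ^ (m - a) * (q ^ ((a + kbA) - n) * t ^ kuA) =
      (-1 : ℚ) ^ ((m + k) - n) *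
        ((-1 : ℚ) ^ (kA - k) * (-q) ^ ((a + kbA) - n) * (-t) ^ kuA) := by
  rw [neg_pow q, neg_pow t]
  have key : (-1 : ℚ) ^ (((m + k) - n) + ((kA - k) + (((a + kbA) - n) + kuA))) =
      (-1 : ℚ) ^ (m - a) := by
    rw [neg_one_pow_eq_pow_mod_two, neg_one_pow_eq_pow_mod_two (n := m - a)]
    congr 1
    omega
  calc (-1 : ℚ) ^ (m - a) * (q ^ ((a + kbA) - n) * t ^ kuA)
      = (-1 : ℚ) ^ (((m + k) - n) + ((kA - k) + (((a + kbA) - n) + kuA))) *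
          (q ^ ((a + kbA) - n) * t ^ kuA) := by rw [key]
    _ = _ := by rw [pow_add, pow_add, pow_add]; ring

end SFT

end FinalAssembly


section Statement

open SGraph

/-- Theorem 5.3: the number of nowhere-zero `G`-flows is
`(−1)^{|E|−|V|+k(Γ)} · T_Σ(0, 1−|G|, 1−|G|/|2G|)`. -/
theorem card_nowhereZero_flows_eq_signedTutte
    (V E : Type) [Finite V] [Finite E] (Γ : SGraph V E)
    (ω : E → Bool → ℤˣ) (hω : Γ.IsCompatible ω)
    (G : Type) [AddCommGroup G] [Finite G] :
    (Nat.card {f : E → G // Γ.IsFlow ω f ∧ ∀ e : E, f e ≠ 0} : ℚ) =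
      (-1 : ℚ) ^ ((Nat.card E + Γ.kAll) - Nat.card V) *
        Γ.signedTutte (0 : ℚ) (1 - (Nat.card G : ℚ))
          (1 - (Nat.card G : ℚ) / (Nat.card (twoG G) : ℚ)) := by
  classical
  haveI : Fintype E := Fintype.ofFinite E
  haveI : Fintype G := Fintype.ofFinite G
  have hq0 : (Nat.card G : ℚ) ≠ 0 := by
    have : 0 < Nat.card G := Nat.card_pos
    exact_mod_cast this.ne'
  have hc2 : (Nat.card (twoG G) : ℚ) ≠ 0 := by
    have : 0 < Nat.card (twoG G) := Nat.card_pos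
    exact_mod_cast this.ne'
  have hqt : (Nat.card G : ℚ) =
      (Nat.card (G ⧸ twoG G) : ℚ) * (Nat.card (twoG G) : ℚ) := by
    have h := AddSubgroup.card_eq_card_quotient_mul_card_addSubgroup (twoG G)
    exact_mod_cast congrArg (fun x : ℕ => (x : ℚ)) h
  have e1 : ((0 : ℚ) - 1) = -1 := by norm_num
  have e2 : ((1 - (Nat.card G : ℚ)) - 1) = -(Nat.card G : ℚ) := by ring
  have e3 : ((1 - (Nat.card G : ℚ) / (Nat.card (twoG G) : ℚ)) - 1) =
      -(Nat.card (G ⧸ twoG G) : ℚ) := by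
    have hdiv : (Nat.card G : ℚ) / (Nat.card (twoG G) : ℚ) =
        (Nat.card (G ⧸ twoG G) : ℚ) := by
      rw [hqt]
      field_simp
    rw [show ((1 - (Nat.card G : ℚ) / (Nat.card (twoG G) : ℚ)) - 1) =
      -((Nat.card G : ℚ) / (Nat.card (twoG G) : ℚ)) from by ring, hdiv]
  rw [SFT.moebius Γ ω G, SGraph.signedTutte, finsum_eq_sum_of_fintype, Finset.mul_sum]
  apply Finset.sum_congr rfl
  intro A _
  have h1 : A.card ≤ Nat.card E := by
    rw [Nat.card_eq_fintype_card, ← Finset.card_univ]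
    exact Finset.card_le_card (Finset.subset_univ A)
  have h2 : Nat.card V ≤ A.card + (Γ.restrict (A : Set E)).kb := SFT.bound_restrict Γ A
  have h3 : Nat.card V ≤ Nat.card E + Γ.kAll :=
    le_trans (SFT.vertex_bound Γ) (Nat.add_le_add_left (SFT.kb_le_kAll Γ) _)
  have h4 : Γ.kAll ≤ (Γ.restrict (A : Set E)).kAll := SFT.kAll_le_restrict Γ _
  have h5 : (Γ.restrict (A : Set E)).kb + (Γ.restrict (A : Set E)).ku =
      (Γ.restrict (A : Set E)).kAll := SFT.kb_add_ku _
  have hNA : (Nat.card {g : E → G // Γ.IsFlow ω g ∧ ∀ e ∉ A, g e = 0} : ℚ) =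
      (Nat.card G : ℚ) ^ ((A.card + (Γ.restrict (A : Set E)).kb) - Nat.card V) *
        (Nat.card (G ⧸ twoG G) : ℚ) ^ (Γ.restrict (A : Set E)).ku := by
    have h := SFT.card_flows_restrict Γ ω G hω A
    have hQ : (Nat.card {g : E → G // Γ.IsFlow ω g ∧ ∀ e ∉ A, g e = 0} : ℚ) *
        (Nat.card G : ℚ) ^ Nat.card V =
        (Nat.card G : ℚ) ^ (A.card + (Γ.restrict (A : Set E)).kb) *
          (Nat.card (G ⧸ twoG G) : ℚ) ^ (Γ.restrict (A : Set E)).ku := by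
      exact_mod_cast congrArg (fun x : ℕ => (x : ℚ)) h
    have hsplit : (Nat.card G : ℚ) ^ (A.card + (Γ.restrict (A : Set E)).kb) =
        (Nat.card G : ℚ) ^ ((A.card + (Γ.restrict (A : Set E)).kb) - Nat.card V) *
          (Nat.card G : ℚ) ^ Nat.card V := by
      rw [← pow_add, Nat.sub_add_cancel h2]
    rw [hsplit] at hQ
    refine mul_right_cancel₀ (pow_ne_zero (Nat.card V) hq0) ?_
    rw [hQ]
    ring
  rw [hNA, e1, e2, e3]
  exact SFT.sign_arith (Nat.card E) A.card (Nat.card V) Γ.kAll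
    (Γ.restrict (A : Set E)).kAll (Γ.restrict (A : Set E)).kb (Γ.restrict (A : Set E)).ku
    (Nat.card G : ℚ) (Nat.card (G ⧸ twoG G) : ℚ) h1 h2 h3 h4 h5


end Statement
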